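/- Let n ≥ 1 be an integer and γ ∈ (0,1). The function K(y,x) = y^{2γ} / (y² + |x|²)^{(n+2γ)/2}, defined for y > 0 and x ∈ ℝⁿ, satisfies div(y^{1-2γ} ∇K) = 0 on the open upper half space ℝ^{n+1}_+ = {(y,x) : y > 0}. -/

import Mathlib

open Real

/-- Weighted divergence `div(y^{1-2γ} ∇u)` on `ℝ^{n+1} = ℝ × ℝⁿ`,
with first coordinate `y` and Euclidean gradient/divergence. -/
noncomputable def divW {n : ℕ} (γ : ℝ) (u : ℝ × EuclideanSpace ℝ (Fin n) → ℝ)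
    (z : ℝ × EuclideanSpace ℝ (Fin n)) : ℝ :=
  fderiv ℝ (fun p : ℝ × EuclideanSpace ℝ (Fin n) =>
      p.1 ^ (1 - 2 * γ) * fderiv ℝ u p (1, 0)) z (1, 0)
    + ∑ i : Fin n,
      fderiv ℝ (fun p : ℝ × EuclideanSpace ℝ (Fin n) =>
          p.1 ^ (1 - 2 * γ) * fderiv ℝ u p (0, EuclideanSpace.single i 1)) z
        (0, EuclideanSpace.single i 1)

/-- The Caffarelli–Silvestre Poisson kernel
`K(y,x) = y^{2γ} / (y² + |x|²)^{(n+2γ)/2}` is `D`-harmonic on the open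
upper half space: `div(y^{1-2γ} ∇K) = 0` wherever `y > 0`. -/
theorem poisson_kernel_divW_eq_zero (n : ℕ) (hn : 1 ≤ n) (γ : ℝ)
    (h0 : 0 < γ) (h1 : γ < 1)
    (z : ℝ × EuclideanSpace ℝ (Fin n)) (hz : 0 < z.1) :
    divW γ (fun p : ℝ × EuclideanSpace ℝ (Fin n) =>
      p.1 ^ (2 * γ) / (p.1 ^ 2 + ‖p.2‖ ^ 2) ^ (((n : ℝ) + 2 * γ) / 2)) z = 0 := by
  have hb2 : ((n : ℝ) + 2 * γ) / 2 * 2 = (n : ℝ) + 2 * γ := by ring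
  set b : ℝ := ((n : ℝ) + 2 * γ) / 2 with hb
  set a : ℝ := 2 * γ with ha
  set u : ℝ × EuclideanSpace ℝ (Fin n) → ℝ :=
    fun p => p.1 ^ a / (p.1 ^ 2 + ‖p.2‖ ^ 2) ^ b with hu
  -- positivity of the denominator base
  have hGpos : ∀ q : ℝ × EuclideanSpace ℝ (Fin n), 0 < q.1 →
      0 < q.1 * q.1 + (inner ℝ q.2 q.2 : ℝ) := by
    intro q hq
    have : (inner ℝ q.2 q.2 : ℝ) = ‖q.2‖ ^ 2 := real_inner_self_eq_norm_sq q.2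
    nlinarith [sq_nonneg ‖q.2‖, this]
  have hSopen : IsOpen {q : ℝ × EuclideanSpace ℝ (Fin n) | 0 < q.1} :=
    isOpen_lt continuous_const continuous_fst
  -- u agrees with the product form on the upper half space
  have huU : ∀ q : ℝ × EuclideanSpace ℝ (Fin n), 0 < q.1 →
      u q = q.1 ^ a * (q.1 * q.1 + (inner ℝ q.2 q.2 : ℝ)) ^ (-b) := by
    intro q hq
    have hg := hGpos q hq
    have h2 : q.1 * q.1 + (inner ℝ q.2 q.2 : ℝ) = q.1 ^ 2 + ‖q.2‖ ^ 2 := by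
      rw [real_inner_self_eq_norm_sq]; ring
    show q.1 ^ a / (q.1 ^ 2 + ‖q.2‖ ^ 2) ^ b = _
    rw [← h2, rpow_neg hg.le, div_eq_mul_inv]
  -- the inner gradient, evaluated in the two kinds of directions
  have key : ∀ q : ℝ × EuclideanSpace ℝ (Fin n), 0 < q.1 →
      (fderiv ℝ u q (1, 0) =
        a * q.1 ^ (a - 1) * (q.1 * q.1 + (inner ℝ q.2 q.2 : ℝ)) ^ (-b)
          - 2 * b * (q.1 ^ a * q.1) * (q.1 * q.1 + (inner ℝ q.2 q.2 : ℝ)) ^ (-b - 1))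
      ∧ ∀ i : Fin n, fderiv ℝ u q (0, EuclideanSpace.single i 1) =
          -(2 * b) * q.1 ^ a * (q.1 * q.1 + (inner ℝ q.2 q.2 : ℝ)) ^ (-b - 1) * q.2 i := by
    intro q hq
    have hg := hGpos q hq
    have hGq := ((hasFDerivAt_fst (𝕜 := ℝ) (p := q)).mul
      (hasFDerivAt_fst (𝕜 := ℝ) (p := q))).add
      ((hasFDerivAt_snd (𝕜 := ℝ) (p := q)).inner ℝ (hasFDerivAt_snd (𝕜 := ℝ) (p := q)))
    have HUq := ((hasFDerivAt_fst (𝕜 := ℝ) (p := q)).rpow_const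
      (p := a) (Or.inl hq.ne')).mul (hGq.rpow_const (p := -b) (Or.inl hg.ne'))
    have hfe : u =ᶠ[nhds q] fun x : ℝ × EuclideanSpace ℝ (Fin n) =>
        x.1 ^ a * (x.1 * x.1 + (inner ℝ x.2 x.2 : ℝ)) ^ (-b) :=
      Filter.eventually_of_mem (hSopen.mem_nhds hq) (fun r hr => huU r hr)
    constructor
    · erw [hfe.fderiv_eq, HUq.fderiv]
      simp
      ring
    · intro i
      erw [hfe.fderiv_eq, HUq.fderiv]
      simp [fderivInnerCLM_apply, EuclideanSpace.inner_single_right,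
        EuclideanSpace.inner_single_left]
      ring

  -- Step B: derivatives of the flux components at z
  have hgz := hGpos z hz
  have hGz := ((hasFDerivAt_fst (𝕜 := ℝ) (p := z)).mul
    (hasFDerivAt_fst (𝕜 := ℝ) (p := z))).add
    ((hasFDerivAt_snd (𝕜 := ℝ) (p := z)).inner ℝ (hasFDerivAt_snd (𝕜 := ℝ) (p := z)))
  -- eventual equality for the y-component
  have hE1 : (fun p : ℝ × EuclideanSpace ℝ (Fin n) =>
        p.1 ^ (1 - a) * fderiv ℝ u p (1, 0)) =ᶠ[nhds z]
      (fun x : ℝ × EuclideanSpace ℝ (Fin n) =>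
        a * (x.1 * x.1 + (inner ℝ x.2 x.2 : ℝ)) ^ (-b)
          - 2 * b * ((x.1 * x.1) * (x.1 * x.1 + (inner ℝ x.2 x.2 : ℝ)) ^ (-b - 1))) := by
    refine Filter.eventually_of_mem (hSopen.mem_nhds hz) (fun q hq => ?_)
    have hq' : 0 < q.1 := hq
    have e1 : q.1 ^ (1 - a) * q.1 ^ (a - 1) = 1 := by
      rw [← rpow_add hq']; norm_num
    have e2 : q.1 ^ (1 - a) * q.1 ^ a = q.1 := by
      rw [← rpow_add hq']; norm_num
    show q.1 ^ (1 - a) * fderiv ℝ u q (1, 0) = _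
    rw [(key q hq').1]
    set W := (inner ℝ q.2 q.2 : ℝ)
    linear_combination (a * (q.1 * q.1 + W) ^ (-b)) * e1
      - (2 * b * q.1 * (q.1 * q.1 + W) ^ (-b - 1)) * e2
  have hEi : ∀ i : Fin n, (fun p : ℝ × EuclideanSpace ℝ (Fin n) =>
        p.1 ^ (1 - a) * fderiv ℝ u p (0, EuclideanSpace.single i 1)) =ᶠ[nhds z]
      (fun x : ℝ × EuclideanSpace ℝ (Fin n) =>
        -(2 * b) * (x.1 * ((x.1 * x.1 + (inner ℝ x.2 x.2 : ℝ)) ^ (-b - 1) * x.2 i))) := by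
    intro i
    refine Filter.eventually_of_mem (hSopen.mem_nhds hz) (fun q hq => ?_)
    have hq' : 0 < q.1 := hq
    have e2 : q.1 ^ (1 - a) * q.1 ^ a = q.1 := by
      rw [← rpow_add hq']; norm_num
    show q.1 ^ (1 - a) * fderiv ℝ u q (0, EuclideanSpace.single i 1) = _
    rw [(key q hq').2 i]
    set W := (inner ℝ q.2 q.2 : ℝ)
    linear_combination (-(2 * b) * (q.1 * q.1 + W) ^ (-b - 1) * q.2 i) * e2
  -- derivative of the first flux component at z
  have HF1 := ((hGz.rpow_const (p := -b) (Or.inl hgz.ne')).const_mul a).sub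
    ((((hasFDerivAt_fst (𝕜 := ℝ) (p := z)).mul (hasFDerivAt_fst (𝕜 := ℝ) (p := z))).mul
      (hGz.rpow_const (p := -b - 1) (Or.inl hgz.ne'))).const_mul (2 * b))
  have hval1 : fderiv ℝ (fun x : ℝ × EuclideanSpace ℝ (Fin n) =>
        a * (x.1 * x.1 + (inner ℝ x.2 x.2 : ℝ)) ^ (-b)
          - 2 * b * ((x.1 * x.1) * (x.1 * x.1 + (inner ℝ x.2 x.2 : ℝ)) ^ (-b - 1))) z (1, 0)
      = -(2 * a * b) * z.1 * (z.1 * z.1 + (inner ℝ z.2 z.2 : ℝ)) ^ (-b - 1)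
        - 4 * b * z.1 * (z.1 * z.1 + (inner ℝ z.2 z.2 : ℝ)) ^ (-b - 1)
        + 4 * b * (b + 1) * (z.1 * (z.1 * z.1)) * (z.1 * z.1 + (inner ℝ z.2 z.2 : ℝ)) ^ (-b - 1 - 1) := by
    erw [HF1.fderiv]
    simp
    ring
  -- derivative of the tangential flux components at z
  have hproj : ∀ i : Fin n, HasFDerivAt (fun x : ℝ × EuclideanSpace ℝ (Fin n) => x.2 i)
      ((EuclideanSpace.proj i).comp
        (ContinuousLinearMap.snd ℝ ℝ (EuclideanSpace ℝ (Fin n)))) z :=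
    fun i => ContinuousLinearMap.hasFDerivAt
      ((EuclideanSpace.proj i).comp
        (ContinuousLinearMap.snd ℝ ℝ (EuclideanSpace ℝ (Fin n))))
  have hvali : ∀ i : Fin n, fderiv ℝ (fun x : ℝ × EuclideanSpace ℝ (Fin n) =>
        -(2 * b) * (x.1 * ((x.1 * x.1 + (inner ℝ x.2 x.2 : ℝ)) ^ (-b - 1) * x.2 i))) z
        (0, EuclideanSpace.single i 1)
      = (4 * b * (b + 1) * z.1 * (z.1 * z.1 + (inner ℝ z.2 z.2 : ℝ)) ^ (-b - 1 - 1))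
          * (z.2 i * z.2 i)
        - 2 * b * z.1 * (z.1 * z.1 + (inner ℝ z.2 z.2 : ℝ)) ^ (-b - 1) := by
    intro i
    have HFi := (((hasFDerivAt_fst (𝕜 := ℝ) (p := z)).mul
      ((hGz.rpow_const (p := -b - 1) (Or.inl hgz.ne')).mul (hproj i))).const_mul (-(2 * b)))
    erw [HFi.fderiv]
    simp [fderivInnerCLM_apply, EuclideanSpace.inner_single_right,
      EuclideanSpace.inner_single_left]
    ring
  have hX : ∑ i : Fin n, z.2 i * z.2 i = (inner ℝ z.2 z.2 : ℝ) := by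
    rw [PiLp.inner_apply]; simp [RCLike.inner_apply, mul_comm, sq]
  -- put everything together
  simp only [divW]
  have hsum : ∑ i : Fin n, fderiv ℝ (fun p : ℝ × EuclideanSpace ℝ (Fin n) =>
        p.1 ^ (1 - a) * fderiv ℝ u p (0, EuclideanSpace.single i 1)) z
        (0, EuclideanSpace.single i 1)
      = (4 * b * (b + 1) * z.1 * (z.1 * z.1 + (inner ℝ z.2 z.2 : ℝ)) ^ (-b - 1 - 1))
          * (inner ℝ z.2 z.2 : ℝ)
        - (n : ℝ) * (2 * b * z.1 * (z.1 * z.1 + (inner ℝ z.2 z.2 : ℝ)) ^ (-b - 1)) := by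
    rw [Finset.sum_congr rfl (fun i (_ : i ∈ Finset.univ) => by
      rw [(hEi i).fderiv_eq, hvali i])]
    rw [Finset.sum_sub_distrib, ← Finset.mul_sum, hX, Finset.sum_const, Finset.card_univ,
      Fintype.card_fin, nsmul_eq_mul]
  rw [hE1.fderiv_eq, hval1, hsum]
  have hPQ : (z.1 * z.1 + (inner ℝ z.2 z.2 : ℝ)) ^ (-b - 1)
      = (z.1 * z.1 + (inner ℝ z.2 z.2 : ℝ)) ^ (-b - 1 - 1)
        * (z.1 * z.1 + (inner ℝ z.2 z.2 : ℝ)) := by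
    rw [← rpow_add_one hgz.ne' (-b - 1 - 1)]
    congr 1
    ring
  rw [hPQ, ha, hb]
  ring
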